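/- Let ε be a real number and n a positive integer with 0 ≤ ε < 1 and log₂ n ≥ 8/ε². Let 𝒫 be a partition of [n] = {1,…,n} with at most n/2 parts, and let s := [Sym(n) : SStab_n(𝒫)] be the index of the setwise stabiliser of 𝒫 in Sym(n). If n ≤ s ≤ 2^(n^(1−ε)), then 𝒫 contains a part P with |P| ≥ n − (33/ε)·(log₂ s)/(log₂ n). -/

import Mathlib

open Pointwise

namespace Stmt6Aux

/-- `16 j + 16 ≤ 2 ^ j` for `j ≥ 16`. -/
lemma pow_aux : ∀ j, 16 ≤ j → 16 * j + 16 ≤ 2 ^ j := by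
  intro j hj
  induction j, hj using Nat.le_induction with
  | base => norm_num
  | succ k hk ih => calc 16 * (k + 1) + 16 ≤ 2 * (16 * k + 16) := by omega
        _ ≤ 2 * 2 ^ k := by omega
        _ = 2 ^ (k + 1) := by ring

/-- Central binomial lower bound. -/
lemma central (n : ℕ) : 2 ^ n ≤ (n + 1) * n.choose (n / 2) := by
  calc 2 ^ n = ∑ m ∈ Finset.range (n + 1), n.choose m := (Nat.sum_range_choose n).symm
    _ ≤ ∑ _m ∈ Finset.range (n + 1), n.choose (n / 2) :=
        Finset.sum_le_sum fun i _ => Nat.choose_le_middle i n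
    _ = (n + 1) * n.choose (n / 2) := by simp [Finset.sum_const, mul_comm]

/-- Ratio bound: descending from the middle loses at most a factor 3 per step. -/
lemma ratio (n m : ℕ) : ∀ j, n ≤ 4 * m + 3 → 2 * (m + j) ≤ n →
    n.choose (m + j) ≤ 3 ^ j * n.choose m := by
  intro j
  induction j with
  | zero => simp
  | succ i ih =>
    intro h1 h2
    have hih := ih h1 (by omega)
    have key : n.choose (m + i + 1) * (m + i + 1) = n.choose (m + i) * (n - (m + i)) :=
      Nat.choose_succ_right_eq n (m + i)
    have h3 : n - (m + i) ≤ 3 * (m + i + 1) := by omega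
    have : n.choose (m + i + 1) * (m + i + 1) ≤ 3 * n.choose (m + i) * (m + i + 1) := by
      calc n.choose (m + i + 1) * (m + i + 1) = n.choose (m + i) * (n - (m + i)) := key
        _ ≤ n.choose (m + i) * (3 * (m + i + 1)) := Nat.mul_le_mul_left _ h3
        _ = 3 * n.choose (m + i) * (m + i + 1) := by ring
    have h4 : n.choose (m + i + 1) ≤ 3 * n.choose (m + i) := Nat.le_of_mul_le_mul_right this (by omega)
    calc n.choose (m + (i + 1)) = n.choose (m + i + 1) := by ring_nf
      _ ≤ 3 * n.choose (m + i) := h4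
      _ ≤ 3 * (3 ^ i * n.choose m) := Nat.mul_le_mul_left _ hih
      _ = 3 ^ (i + 1) * n.choose m := by ring

/-- `(n/t)^t ≤ C(n,t)`. -/
lemma choose_lb (n t : ℕ) (htn : t ≤ n) : ((n : ℝ) / t) ^ t ≤ n.choose t := by
  rcases Nat.eq_zero_or_pos t with rfl | ht
  · simp
  have htR : (0 : ℝ) < t := by positivity
  have hfac : (0 : ℝ) < (t.factorial : ℝ) := by positivity
  rw [← mul_le_mul_iff_of_pos_right hfac]
  have hdesc : ((n.descFactorial t : ℕ) : ℝ) = ∏ i ∈ Finset.range t, ((n : ℝ) - i) := by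
    rw [Nat.descFactorial_eq_prod_range]
    push_cast
    refine Finset.prod_congr rfl fun i hi => ?_
    have : i ≤ n := le_trans (Nat.le_of_lt_succ (Nat.lt_succ_of_lt (Finset.mem_range.mp hi))) htn
    push_cast [Nat.cast_sub this]
    ring
  have hfacprod : ((t.factorial : ℕ) : ℝ) = ∏ i ∈ Finset.range t, ((t : ℝ) - i) := by
    have h1 : t.factorial = ∏ i ∈ Finset.range t, (i + 1) :=
      (Finset.prod_range_add_one_eq_factorial t).symm
    rw [h1]
    push_cast
    rw [← Finset.prod_range_reflect (fun i => ((i : ℝ) + 1)) t]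
    refine Finset.prod_congr rfl fun i hi => ?_
    have hi' := Finset.mem_range.mp hi
    have : (↑(t - 1 - i) : ℝ) = (t : ℝ) - 1 - i := by
      have h2 : t - 1 - i + (1 + i) = t := by omega
      have := congrArg (Nat.cast : ℕ → ℝ) h2
      push_cast at this
      linarith
    rw [this]; ring
  calc ((n : ℝ) / t) ^ t * t.factorial = ∏ i ∈ Finset.range t, ((n : ℝ) / t * ((t : ℝ) - i)) := by
        rw [Finset.prod_mul_distrib, Finset.prod_const, ← hfacprod]
        simp [Finset.card_range]
    _ ≤ ∏ i ∈ Finset.range t, ((n : ℝ) - i) := by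
        refine Finset.prod_le_prod (fun i hi => ?_) (fun i hi => ?_)
        · have hi' := Finset.mem_range.mp hi
          have h1 : (i : ℝ) < t := by exact_mod_cast hi'
          have h2 : (0:ℝ) ≤ (n:ℝ)/t := by positivity
          nlinarith
        · have hi' := Finset.mem_range.mp hi
          have h1 : (i : ℝ) ≤ t := by exact_mod_cast hi'.le
          have h2 : (t : ℝ) ≤ n := by exact_mod_cast htn
          rw [div_mul_eq_mul_div, div_le_iff₀ htR]
          nlinarith
    _ = (n.descFactorial t : ℝ) := hdesc.symm
    _ = (n.choose t : ℝ) * t.factorial := by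
        rw [Nat.descFactorial_eq_factorial_mul_choose]; push_cast; ring


/-- Any two finsets of the same size are related by a permutation. -/
lemma exists_perm_finset {α : Type*} [Fintype α] [DecidableEq α] (s t : Finset α) (h : s.card = t.card) :
    ∃ σ : Equiv.Perm α, ∀ x, x ∈ s ↔ σ x ∈ t := by
  have hc : sᶜ.card = tᶜ.card := by rw [Finset.card_compl, Finset.card_compl, h]
  let e1 : {x // x ∈ s} ≃ {x // x ∈ t} := Finset.equivOfCardEq h
  let e2' : {x // x ∈ sᶜ} ≃ {x // x ∈ tᶜ} := Finset.equivOfCardEq hc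
  let e2 : {x // ¬ x ∈ s} ≃ {x // ¬ x ∈ t} :=
    ((Equiv.subtypeEquivRight (fun x => by simp)).trans e2').trans
      (Equiv.subtypeEquivRight (fun x => by simp))
  let σ : Equiv.Perm α :=
    ((Equiv.sumCompl (· ∈ s)).symm.trans (e1.sumCongr e2)).trans (Equiv.sumCompl (· ∈ t))
  refine ⟨σ, fun x => ?_⟩
  by_cases hx : x ∈ s
  · simp only [σ, Equiv.trans_apply, Equiv.sumCompl_symm_apply_of_pos hx,
      Equiv.sumCongr_apply, Sum.map_inl, Equiv.sumCompl_apply_inl]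
    exact ⟨fun _ => (e1 ⟨x, hx⟩).2, fun _ => hx⟩
  · simp only [σ, Equiv.trans_apply, Equiv.sumCompl_symm_apply_of_neg hx,
      Equiv.sumCongr_apply, Sum.map_inr, Equiv.sumCompl_apply_inr]
    constructor
    · intro h'; exact absurd h' hx
    · intro h'
      exact absurd h' (by simpa using (e2 ⟨x, hx⟩).2)

/-- Any two sets of the same (finite) size are related by a permutation. -/
lemma exists_perm_set {α : Type*} [Fintype α] [DecidableEq α] (U V : Set α) (h : U.ncard = V.ncard) :
    ∃ σ : Equiv.Perm α, σ '' U = V := by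
  have hU : U.Finite := Set.toFinite U
  have hV : V.Finite := Set.toFinite V
  have hcard : hU.toFinset.card = hV.toFinset.card := by
    rw [← Set.ncard_eq_toFinset_card U hU, ← Set.ncard_eq_toFinset_card V hV, h]
  obtain ⟨σ, hσ⟩ := exists_perm_finset hU.toFinset hV.toFinset hcard
  refine ⟨σ, ?_⟩
  have hsub : σ '' U ⊆ V := by
    rintro y ⟨x, hx, rfl⟩
    have : x ∈ hU.toFinset := hU.mem_toFinset.mpr hx
    exact hV.mem_toFinset.mp ((hσ x).mp this)
  refine Set.eq_of_subset_of_ncard_le hsub ?_ hV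
  rw [Set.ncard_image_of_injective U σ.injective, h]

/-- Unfolding pointwise `smul` of a permutation on a set. -/
lemma smul_set_eq {α : Type*} (σ : Equiv.Perm α) (P : Set α) : σ • P = σ '' P := rfl

lemma smul_setset_eq {α : Type*} (σ : Equiv.Perm α) (C : Set (Set α)) :
    σ • C = (fun P => σ '' P) '' C := rfl


lemma ncard_smul_setset {α : Type*} (σ : Equiv.Perm α) (C : Set (Set α)) :
    (σ • C).ncard = C.ncard := by
  rw [smul_setset_eq]
  exact Set.ncard_image_of_injective _ (Set.image_injective.mpr σ.injective)

lemma pairwiseDisjoint_smul {α : Type*} (σ : Equiv.Perm α) (C : Set (Set α))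
    (h : C.PairwiseDisjoint id) : (σ • C).PairwiseDisjoint id := by
  rw [smul_setset_eq]
  rintro P ⟨p, hp, rfl⟩ Q ⟨q, hq, rfl⟩ hne
  have hpq : p ≠ q := fun he => hne (by rw [he])
  simpa [Function.onFun] using
    (Set.disjoint_image_iff σ.injective).mpr (h hp hq hpq)

/-- In a pairwise-disjoint family of subsets of a fintype, there are at most `n / a` sets
of size `a` (stated multiplicatively). -/
lemma card_parts_of_size {n : ℕ} (D : Set (Set (Fin n))) (hdisj : D.PairwiseDisjoint id)
    (a : ℕ) : {P ∈ D | P.ncard = a}.ncard * a ≤ n := by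
  classical
  set 𝒮fin : Finset (Set (Fin n)) := (Set.toFinite {P ∈ D | P.ncard = a}).toFinset with h𝒮
  have hmem : ∀ P, P ∈ 𝒮fin ↔ P ∈ D ∧ P.ncard = a := by
    intro P; rw [Set.Finite.mem_toFinset]; rfl
  have hdisjF : ∀ x ∈ 𝒮fin, ∀ y ∈ 𝒮fin, x ≠ y →
      Disjoint ((Set.toFinite x).toFinset) ((Set.toFinite y).toFinset) := by
    intro x hx y hy hxy
    have := hdisj ((hmem x).mp hx).1 ((hmem y).mp hy).1 hxy
    rw [Finset.disjoint_left]
    intro t htx hty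
    exact Set.disjoint_left.mp this ((Set.toFinite x).mem_toFinset.mp htx)
      ((Set.toFinite y).mem_toFinset.mp hty)
  have hsum : ∑ P ∈ 𝒮fin, ((Set.toFinite P).toFinset).card ≤ n := by
    rw [← Finset.card_biUnion hdisjF]
    have := Finset.card_le_univ (𝒮fin.biUnion fun P => (Set.toFinite P).toFinset)
    simpa using this
  have heach : ∀ P ∈ 𝒮fin, ((Set.toFinite P).toFinset).card = a := by
    intro P hP
    rw [← Set.ncard_eq_toFinset_card P (Set.toFinite P)]
    exact ((hmem P).mp hP).2
  rw [Finset.sum_congr rfl heach, Finset.sum_const, smul_eq_mul] at hsum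
  rwa [Set.ncard_eq_toFinset_card _ (Set.toFinite _), ← h𝒮]


/-- Counting lemma A: the orbit of a pairwise disjoint family containing a set of size `a`
has at least `choose n a / (n/a)` elements. -/
lemma countA {n : ℕ} (C : Set (Set (Fin n))) (hdisj : C.PairwiseDisjoint id)
    (P₁ : Set (Fin n)) (hP₁ : P₁ ∈ C) (ha : 0 < P₁.ncard) :
    n.choose P₁.ncard ≤ (n / P₁.ncard) * (MulAction.orbit (Equiv.Perm (Fin n)) C).ncard := by
  classical
  set a := P₁.ncard with ha'
  have hperm : ∀ S : Finset (Fin n), S.card = a → ∃ σ : Equiv.Perm (Fin n), σ '' P₁ = ↑S :=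
    fun S h => exists_perm_set P₁ ↑S (by rw [Set.ncard_coe_finset, h])
  choose σf hσf using hperm
  set T : Finset (Finset (Fin n)) := Finset.powersetCard a Finset.univ with hT
  have hTmem : ∀ S ∈ T, S.card = a := fun S hS => (Finset.mem_powersetCard.mp hS).2
  set f : Finset (Fin n) → Set (Set (Fin n)) :=
    fun S => if h : S.card = a then σf S h • C else ∅ with hf
  have hfval : ∀ (S) (h : S.card = a), f S = σf S h • C := by
    intro S h; rw [hf]; simp [h]
  have hSmem : ∀ (S) (h : S.card = a), (↑S : Set (Fin n)) ∈ f S := by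
    intro S h
    rw [hfval S h, smul_setset_eq]
    exact ⟨P₁, hP₁, hσf S h⟩
  have hfiber : ∀ D ∈ T.image f, (T.filter fun S => f S = D).card ≤ n / a := by
    intro D hD
    obtain ⟨S₀, hS₀, hfS₀⟩ := Finset.mem_image.mp hD
    have hc₀ := hTmem S₀ hS₀
    have hDdisj : D.PairwiseDisjoint id := by
      rw [← hfS₀, hfval S₀ hc₀]
      exact pairwiseDisjoint_smul _ _ hdisj
    rw [Nat.le_div_iff_mul_le ha]
    have hcard : (T.filter fun S => f S = D).card ≤ {P ∈ D | P.ncard = a}.ncard := by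
      rw [Set.ncard_eq_toFinset_card _ (Set.toFinite _)]
      refine Finset.card_le_card_of_injOn (fun S => (↑S : Set (Fin n))) ?_ ?_
      · intro S hS
        obtain ⟨hST, hfSD⟩ := Finset.mem_filter.mp hS
        have hc := hTmem S hST
        rw [Finset.mem_coe, Set.Finite.mem_toFinset]
        exact ⟨hfSD ▸ hSmem S hc, by rw [Set.ncard_coe_finset, hc]⟩
      · exact fun S _ S' _ h => Finset.coe_injective h
    exact le_trans (Nat.mul_le_mul_right a hcard) (card_parts_of_size D hDdisj a)
  have hmain := Finset.card_le_mul_card_image T (n / a) hfiber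
  have hTcard : T.card = n.choose a := by
    rw [hT, Finset.card_powersetCard, Finset.card_univ, Fintype.card_fin]
  have himg : (T.image f).card ≤ (MulAction.orbit (Equiv.Perm (Fin n)) C).ncard := by
    rw [← Set.ncard_coe_finset]
    refine Set.ncard_le_ncard ?_ (Set.toFinite _)
    intro D hD
    obtain ⟨S₀, hS₀, rfl⟩ := Finset.mem_image.mp (by exact_mod_cast hD)
    rw [hfval S₀ (hTmem S₀ hS₀)]
    exact MulAction.mem_orbit C _
  calc n.choose a = T.card := hTcard.symm
    _ ≤ (n / a) * (T.image f).card := hmain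
    _ ≤ (n / a) * (MulAction.orbit (Equiv.Perm (Fin n)) C).ncard := Nat.mul_le_mul_left _ himg

/-- Counting lemma B: the orbit of a partition is at least `choose n u / 2^k` where `u` is the
size of any union of parts and `k` the number of parts. -/
lemma countB {n : ℕ} (C : Set (Set (Fin n)))
    (F : Set (Set (Fin n))) (hF : F ⊆ C) :
    n.choose (⋃₀ F).ncard ≤ 2 ^ C.ncard * (MulAction.orbit (Equiv.Perm (Fin n)) C).ncard := by
  classical
  set U : Set (Fin n) := ⋃₀ F with hU
  set u := U.ncard with hu
  have hperm : ∀ S : Finset (Fin n), S.card = u → ∃ σ : Equiv.Perm (Fin n), σ '' U = ↑S :=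
    fun S h => exists_perm_set U ↑S (by rw [Set.ncard_coe_finset, h])
  choose σf hσf using hperm
  set T : Finset (Finset (Fin n)) := Finset.powersetCard u Finset.univ with hT
  have hTmem : ∀ S ∈ T, S.card = u := fun S hS => (Finset.mem_powersetCard.mp hS).2
  set f : Finset (Fin n) → Set (Set (Fin n)) :=
    fun S => if h : S.card = u then σf S h • C else ∅ with hf
  have hfval : ∀ (S) (h : S.card = u), f S = σf S h • C := by
    intro S h; rw [hf]; simp [h]
  have hfiber : ∀ D ∈ T.image f, (T.filter fun S => f S = D).card ≤ 2 ^ C.ncard := by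
    intro D hD
    obtain ⟨S₀, hS₀, hfS₀⟩ := Finset.mem_image.mp hD
    have hc₀ := hTmem S₀ hS₀
    have hDcard : D.ncard = C.ncard := by
      rw [← hfS₀, hfval S₀ hc₀, ncard_smul_setset]
    set 𝒟 : Finset (Set (Fin n)) := (Set.toFinite D).toFinset with h𝒟
    have h𝒟card : 𝒟.card = C.ncard := by
      rw [h𝒟, ← Set.ncard_eq_toFinset_card _ (Set.toFinite D), hDcard]
    set g : Finset (Fin n) → Finset (Set (Fin n)) :=
      fun S => 𝒟.filter (fun P => P ⊆ (↑S : Set (Fin n))) with hg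
    have hrec : ∀ S ∈ T.filter (fun S => f S = D), (↑S : Set (Fin n)) = ⋃₀ ↑(g S) := by
      intro S hS
      obtain ⟨hST, hfSD⟩ := Finset.mem_filter.mp hS
      have hc := hTmem S hST
      have himgU : σf S hc '' U = ↑S := hσf S hc
      apply Set.eq_of_subset_of_subset
      · intro x hx
        rw [← himgU] at hx
        obtain ⟨y, hyU, rfl⟩ := hx
        obtain ⟨Q, hQF, hyQ⟩ := hyU
        refine ⟨σf S hc '' Q, ?_, ⟨y, hyQ, rfl⟩⟩
        rw [hg]
        simp only [Finset.coe_filter, Set.mem_setOf_eq]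
        constructor
        · rw [h𝒟, Set.Finite.mem_toFinset, ← hfSD, hfval S hc, smul_setset_eq]
          exact ⟨Q, hF hQF, rfl⟩
        · rw [← himgU]
          exact Set.image_mono (Set.subset_sUnion_of_mem hQF)
      · intro x hx
        obtain ⟨P, hP, hxP⟩ := hx
        rw [hg] at hP
        simp only [Finset.coe_filter, Set.mem_setOf_eq] at hP
        exact hP.2 hxP
    have hcard : (T.filter fun S => f S = D).card ≤ 𝒟.powerset.card := by
      refine Finset.card_le_card_of_injOn g ?_ ?_
      · intro S hS
        rw [Finset.mem_coe, Finset.mem_powerset, hg]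
        exact Finset.filter_subset _ _
      · intro S hS S' hS' hgSS'
        have h1 := hrec S hS
        have h2 := hrec S' hS'
        apply Finset.coe_injective
        rw [h1, h2, hgSS']
    rwa [Finset.card_powerset, h𝒟card] at hcard
  have hmain := Finset.card_le_mul_card_image T (2 ^ C.ncard) hfiber
  have hTcard : T.card = n.choose u := by
    rw [hT, Finset.card_powersetCard, Finset.card_univ, Fintype.card_fin]
  have himg : (T.image f).card ≤ (MulAction.orbit (Equiv.Perm (Fin n)) C).ncard := by
    rw [← Set.ncard_coe_finset]
    refine Set.ncard_le_ncard ?_ (Set.toFinite _)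
    intro D hD
    obtain ⟨S₀, hS₀, rfl⟩ := Finset.mem_image.mp (by exact_mod_cast hD)
    rw [hfval S₀ (hTmem S₀ hS₀)]
    exact MulAction.mem_orbit C _
  calc n.choose u = T.card := hTcard.symm
    _ ≤ 2 ^ C.ncard * (T.image f).card := hmain
    _ ≤ 2 ^ C.ncard * (MulAction.orbit (Equiv.Perm (Fin n)) C).ncard := Nat.mul_le_mul_left _ himg


/-- Greedy: pick a union of parts of size in the window `[θ, θ + a)`. -/
lemma greedy {n : ℕ} (C : Set (Set (Fin n))) (hcover : ⋃₀ C = Set.univ)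
    (a : ℕ) (hsize : ∀ P ∈ C, P.ncard ≤ a) (θ : ℕ) (hθ1 : 1 ≤ θ) (hθn : θ ≤ n) :
    ∃ F ⊆ C, θ ≤ (⋃₀ F).ncard ∧ (⋃₀ F).ncard < θ + a := by
  classical
  set Q : ℕ → Prop := fun j => ∃ Fb : Finset (Set (Fin n)),
    ↑Fb ⊆ C ∧ Fb.card ≤ j ∧ θ ≤ (⋃₀ (↑Fb : Set (Set (Fin n)))).ncard with hQ
  have hex : ∃ j, Q j := by
    refine ⟨((Set.toFinite C).toFinset).card, (Set.toFinite C).toFinset, ?_, le_rfl, ?_⟩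
    · rw [Set.Finite.coe_toFinset]
    · rw [Set.Finite.coe_toFinset, hcover]
      have : (Set.univ : Set (Fin n)).ncard = n := by
        rw [Set.ncard_univ, Nat.card_eq_fintype_card, Fintype.card_fin]
      omega
  have hspec := Nat.find_spec hex
  obtain ⟨Fb, hFbC, hFbcard, hFbθ⟩ := hspec
  have hFbne : Fb.Nonempty := by
    rcases Finset.eq_empty_or_nonempty Fb with rfl | h
    · exfalso; simp only [Finset.coe_empty, Set.sUnion_empty, Set.ncard_empty] at hFbθ; omega
    · exact h
  obtain ⟨P, hP⟩ := hFbne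
  have hfind1 : 1 ≤ Nat.find hex := by
    by_contra h
    push_neg at h
    interval_cases h' : Nat.find hex
    · have := hFbcard
      have hcard0 : Fb.card = 0 := by omega
      rw [Finset.card_eq_zero] at hcard0
      subst hcard0
      simp at hP
  have hmin := Nat.find_min hex (m := Nat.find hex - 1) (by omega)
  simp only [hQ, not_exists, not_and, not_le] at hmin
  have herase := hmin (Fb.erase P)
    (le_trans (Finset.coe_subset.mpr (Finset.erase_subset P Fb)) hFbC)
    (by rw [Finset.card_erase_of_mem hP]; omega)
  -- ⋃₀ Fb ⊆ P ∪ ⋃₀ (erase)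
  have hsplit : (⋃₀ (↑Fb : Set (Set (Fin n)))) = P ∪ ⋃₀ (↑(Fb.erase P) : Set (Set (Fin n))) := by
    conv_lhs => rw [← Finset.insert_erase hP]
    rw [Finset.coe_insert, Set.sUnion_insert]
  refine ⟨↑Fb, hFbC, hFbθ, ?_⟩
  have hle : (⋃₀ (↑Fb : Set (Set (Fin n)))).ncard ≤
      P.ncard + (⋃₀ (↑(Fb.erase P) : Set (Set (Fin n)))).ncard := by
    rw [hsplit]; exact Set.ncard_union_le _ _
  have hPa : P.ncard ≤ a := hsize P (hFbC hP)
  omega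


end Stmt6Aux

open Stmt6Aux

set_option maxHeartbeats 1600000 in
/-- Lemma 7 (large part): let `0 ≤ ε < 1` with `log₂ n ≥ 8/ε²` (written
multiplicatively as `8 ≤ ε² · log₂ n`), let `C` be a partition of `[n]` with at
most `n/2` parts and let `s` be the index of the setwise stabiliser of `C` in
`Sym(n)`.  If `n ≤ s ≤ 2^(n^(1-ε))`, then `C` contains a part with at least
`n - (33/ε) · (log₂ s)/(log₂ n)` elements. -/
theorem stmt_6 (n : ℕ) (hn : 0 < n) (ε : ℝ) (hε0 : 0 ≤ ε) (hε1 : ε < 1)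
    (hlog : 8 ≤ ε ^ 2 * Real.logb 2 n)
    (C : Set (Set (Fin n))) (hC : Setoid.IsPartition C)
    (hparts : (C.ncard : ℝ) ≤ n / 2)
    (s : ℕ) (hs : s = (MulAction.stabilizer (Equiv.Perm (Fin n)) C).index)
    (hns : n ≤ s) (hsub : (s : ℝ) ≤ (2 : ℝ) ^ ((n : ℝ) ^ (1 - ε))) :
    ∃ P ∈ C, (n : ℝ) - 33 / ε * (Real.logb 2 s / Real.logb 2 n) ≤ (P.ncard : ℝ) := by
  classical
  have hnR : (0 : ℝ) < n := by exact_mod_cast hn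
  set L : ℝ := Real.logb 2 n with hLdef
  have hL0 : 0 ≤ L := Real.logb_nonneg one_lt_two (by exact_mod_cast hn)
  have hε2 : ε ^ 2 ≤ 1 := by nlinarith
  have hL8 : 8 ≤ L := by nlinarith
  have hLpos : 0 < L := by linarith
  have hεpos : 0 < ε := by
    rcases lt_or_eq_of_le hε0 with h | h
    · exact h
    · exfalso; rw [← h] at hlog; simp at hlog; nlinarith [hlog]
  -- n ≥ 256
  have hn256R : (256 : ℝ) ≤ n := by
    have h1 : (2 : ℝ) ^ (8 : ℝ) ≤ (2 : ℝ) ^ L :=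
      Real.rpow_le_rpow_of_exponent_le one_le_two hL8
    have h2 : (2 : ℝ) ^ L = n := Real.rpow_logb (by norm_num) (by norm_num) hnR
    have h3 : (2 : ℝ) ^ (8 : ℝ) = 256 := by
      rw [show (8 : ℝ) = ((8 : ℕ) : ℝ) by norm_num, Real.rpow_natCast]; norm_num
    linarith [h1, h2.symm.le, h3]
  have hn256 : 256 ≤ n := by exact_mod_cast hn256R
  have hsR : (256 : ℝ) ≤ s := le_trans hn256R (by exact_mod_cast hns)
  have hs1 : (1 : ℝ) < s := by linarith
  have hspos : (0 : ℝ) < s := by linarith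
  have hlogs_pos : 0 < Real.logb 2 s := Real.logb_pos one_lt_two hs1
  have hεL8 : 8 ≤ ε * L := by nlinarith
  -- upper bound on logb 2 s
  have hupper : Real.logb 2 s ≤ (n : ℝ) ^ (1 - ε) := by
    calc Real.logb 2 s ≤ Real.logb 2 ((2 : ℝ) ^ ((n : ℝ) ^ (1 - ε))) :=
          (Real.logb_le_logb one_lt_two hspos (by positivity)).mpr hsub
      _ = (n : ℝ) ^ (1 - ε) := Real.logb_rpow (by norm_num) (by norm_num)
  -- n ^ ε ≥ 256
  have hnpow : (256 : ℝ) ≤ (n : ℝ) ^ ε := by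
    have h1 : (n : ℝ) ^ ε = (2 : ℝ) ^ (L * ε) := by
      rw [Real.rpow_mul (by norm_num : (0:ℝ) ≤ 2),
        Real.rpow_logb (by norm_num) (by norm_num) hnR]
    rw [h1]
    have h2 : (2 : ℝ) ^ (8 : ℝ) ≤ (2 : ℝ) ^ (L * ε) :=
      Real.rpow_le_rpow_of_exponent_le one_le_two (by nlinarith)
    have h3 : (2 : ℝ) ^ (8 : ℝ) = 256 := by
      rw [show (8 : ℝ) = ((8 : ℕ) : ℝ) by norm_num, Real.rpow_natCast]; norm_num
    linarith
  have hpow_le : (n : ℝ) ^ (1 - ε) ≤ n / 256 := by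
    rw [Real.rpow_sub hnR, Real.rpow_one]
    apply div_le_div_of_nonneg_left (by positivity) (by positivity) hnpow
  -- the largest part
  obtain ⟨P₀, ⟨hP₀C, -⟩, -⟩ := hC.2 ⟨0, hn⟩
  obtain ⟨P₁, hP₁C, hmax⟩ := Set.exists_max_image C Set.ncard (Set.toFinite C) ⟨P₀, hP₀C⟩
  refine ⟨P₁, hP₁C, ?_⟩
  set a := P₁.ncard with hadef
  have ha1 : 1 ≤ a := by
    rw [hadef]
    rw [Nat.one_le_iff_ne_zero]
    intro h0
    have : P₁ = ∅ := by
      have := Set.ncard_eq_zero (Set.toFinite P₁)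
      tauto
    exact hC.1 (this ▸ hP₁C)
  have han : a ≤ n := by
    have h1 := Set.ncard_le_ncard (Set.subset_univ P₁) Set.finite_univ
    rwa [Set.ncard_univ, Nat.card_eq_fintype_card, Fintype.card_fin] at h1
  set t := n - a with htdef
  have htR : (t : ℝ) = n - a := by
    rw [htdef]; push_cast [Nat.cast_sub han]; ring
  have haR : (a : ℝ) = n - t := by linarith
  rw [haR]
  rw [sub_le_sub_iff_left]
  -- goal: t ≤ B
  by_contra hcon
  push_neg at hcon
  have hB0 : 0 < 33 / ε * (Real.logb 2 s / L) := by positivity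
  have htpos : 0 < t := by
    by_contra h
    push_neg at h
    interval_cases t
    · simp at hcon; linarith
  have htposR : (0 : ℝ) < t := by exact_mod_cast htpos
  -- orbit
  have hsorb : s = (MulAction.orbit (Equiv.Perm (Fin n)) C).ncard := by
    rw [hs, MulAction.index_stabilizer]
  rcases lt_or_ge n (2 * a) with hcase | hcase
  · -- Case 1: large part bigger than half
    have hdiv : n / a = 1 := by
      apply Nat.div_eq_of_lt_le <;> omega
    have hchoose := countA C hC.pairwiseDisjoint P₁ hP₁C (by omega)
    rw [← hadef, hdiv, one_mul, ← hsorb] at hchoose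
    have hsymm : n.choose t = n.choose a := by
      rw [htdef, Nat.choose_symm han]
    have hlb : ((n : ℝ) / t) ^ t ≤ (s : ℝ) := by
      calc ((n : ℝ) / t) ^ t ≤ (n.choose t : ℝ) := choose_lb n t (by omega)
        _ = (n.choose a : ℝ) := by rw [hsymm]
        _ ≤ (s : ℝ) := by exact_mod_cast hchoose
    have hntpos : (0 : ℝ) < (n : ℝ) / t := by positivity
    have hloglb : (t : ℝ) * Real.logb 2 ((n : ℝ) / t) ≤ Real.logb 2 s := by
      have := (Real.logb_le_logb one_lt_two (by positivity) hspos).mpr hlb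
      rwa [Real.logb_pow] at this
    have h2t : 2 * (t : ℝ) ≤ n := by
      have : (n : ℝ) < 2 * a := by exact_mod_cast hcase
      linarith
    rcases le_or_gt (t : ℝ) ((n : ℝ) ^ (1 - ε / 33)) with h1a | h1b
    · -- subcase 1a
      have hlogt : Real.logb 2 t ≤ (1 - ε / 33) * L := by
        calc Real.logb 2 t ≤ Real.logb 2 ((n : ℝ) ^ (1 - ε / 33)) :=
              (Real.logb_le_logb one_lt_two htposR (by positivity)).mpr h1a
          _ = (1 - ε / 33) * L := by
              rw [hLdef, Real.logb, Real.logb, Real.log_rpow hnR]; ring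
      have hlogdiv : Real.logb 2 ((n : ℝ) / t) = L - Real.logb 2 t :=
        Real.logb_div (by positivity) (by positivity)
      have hge : ε / 33 * L ≤ Real.logb 2 ((n : ℝ) / t) := by
        rw [hlogdiv]; linarith
      have hkey : (t : ℝ) * (ε / 33 * L) ≤ Real.logb 2 s :=
        le_trans (mul_le_mul_of_nonneg_left hge (le_of_lt htposR)) hloglb
      have hBe : 33 / ε * (Real.logb 2 s / L) * (ε / 33 * L) = Real.logb 2 s := by
        field_simp
      nlinarith [mul_lt_mul_of_pos_right hcon (by positivity : (0:ℝ) < ε / 33 * L)]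
    · -- subcase 1b
      have h2 : (2 : ℝ) ≤ (n : ℝ) / t := by
        rw [le_div_iff₀ htposR]; linarith
      have hlog2 : (1 : ℝ) ≤ Real.logb 2 ((n : ℝ) / t) := by
        calc (1 : ℝ) = Real.logb 2 2 := (Real.logb_self_eq_one one_lt_two).symm
          _ ≤ Real.logb 2 ((n : ℝ) / t) :=
              (Real.logb_le_logb one_lt_two two_pos hntpos).mpr h2
      have hts : (t : ℝ) ≤ Real.logb 2 s := by nlinarith
      -- n^(1-ε/33) ≥ 2 * n^(1-ε)
      have hsplit : (n : ℝ) ^ (1 - ε / 33) = (n : ℝ) ^ (1 - ε) * (n : ℝ) ^ (ε - ε / 33) := by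
        rw [← Real.rpow_add hnR]; ring_nf
      have hfac2 : (2 : ℝ) ≤ (n : ℝ) ^ (ε - ε / 33) := by
        have hn1 : (1 : ℝ) ≤ n := by linarith
        have h1 : (n : ℝ) ^ (ε / 2) ≤ (n : ℝ) ^ (ε - ε / 33) :=
          Real.rpow_le_rpow_of_exponent_le hn1 (by linarith)
        have h2 : (n : ℝ) ^ (ε / 2) = ((n : ℝ) ^ ε) ^ ((1 : ℝ) / 2) := by
          rw [← Real.rpow_mul (le_of_lt hnR)]; ring_nf
        have h3 : (256 : ℝ) ^ ((1 : ℝ) / 2) ≤ ((n : ℝ) ^ ε) ^ ((1 : ℝ) / 2) :=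
          Real.rpow_le_rpow (by norm_num) hnpow (by norm_num)
        have h4 : (256 : ℝ) ^ ((1 : ℝ) / 2) = 16 := by
          rw [show (256 : ℝ) = 16 ^ (2 : ℕ) by norm_num, ← Real.rpow_natCast 16 2,
            ← Real.rpow_mul (by norm_num)]
          norm_num
        rw [h2] at h1
        linarith
      have hbig : 2 * Real.logb 2 s < Real.logb 2 s := by
        have hnn : (0:ℝ) ≤ (n : ℝ) ^ (1 - ε) := by positivity
        calc 2 * Real.logb 2 s ≤ 2 * ((n : ℝ) ^ (1 - ε)) := by linarith
          _ ≤ (n : ℝ) ^ (ε - ε / 33) * ((n : ℝ) ^ (1 - ε)) := by nlinarith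
          _ = (n : ℝ) ^ (1 - ε / 33) := by rw [hsplit]; ring
          _ < (t : ℝ) := h1b
          _ ≤ Real.logb 2 s := hts
      linarith
  · -- Case 2: all parts at most half
    set θ := n / 4 + 1 with hθdef
    obtain ⟨F, hFC, hu1, hu2⟩ := greedy C hC.sUnion_eq_univ a
      (fun P hP => hmax P hP) θ (by omega) (by omega)
    set u := (⋃₀ F).ncard with hudef
    have hun : u ≤ n := by
      have h1 := Set.ncard_le_ncard (Set.subset_univ (⋃₀ F)) Set.finite_univ
      rwa [Set.ncard_univ, Nat.card_eq_fintype_card, Fintype.card_fin] at h1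
    have hu4 : n < 4 * u := by omega
    have hu43 : 4 * u ≤ 3 * n + 4 := by omega
    set m := min u (n - u) with hmdef
    have hm4 : n ≤ 4 * m := by omega
    have hm2 : 2 * m ≤ n := by omega
    have hchooseum : n.choose u = n.choose m := by
      rcases le_total u (n - u) with h | h
      · rw [hmdef, min_eq_left h]
      · rw [hmdef, min_eq_right h, ← Nat.choose_symm hun]
    have hj := ratio n m (n / 2 - m) (by omega) (by omega)
    rw [show m + (n / 2 - m) = n / 2 by omega] at hj
    have hcent := central n
    have hcountB := countB C F hFC
    rw [← hudef, ← hsorb] at hcountB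
    have hk : 2 * C.ncard ≤ n := by
      have h2 : ((2 * C.ncard : ℕ) : ℝ) ≤ (n : ℝ) := by push_cast; linarith
      exact_mod_cast h2
    -- natural number chain
    set j := n / 2 - m with hjdef
    have hchain : 2 ^ n ≤ (n + 1) * 3 ^ j * 2 ^ (n / 2) * s := by
      calc 2 ^ n ≤ (n + 1) * n.choose (n / 2) := hcent
        _ ≤ (n + 1) * (3 ^ j * n.choose m) := Nat.mul_le_mul_left _ hj
        _ = (n + 1) * 3 ^ j * n.choose u := by rw [hchooseum]; ring
        _ ≤ (n + 1) * 3 ^ j * (2 ^ C.ncard * s) := Nat.mul_le_mul_left _ hcountB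
        _ ≤ (n + 1) * 3 ^ j * (2 ^ (n / 2) * s) := by
            apply Nat.mul_le_mul_left
            apply Nat.mul_le_mul_right
            exact Nat.pow_le_pow_right (by norm_num) (by omega)
        _ = (n + 1) * 3 ^ j * 2 ^ (n / 2) * s := by ring
    have hn1pow : (n + 1 : ℕ) ≤ 2 ^ (n / 16) := by
      calc n + 1 ≤ 16 * (n / 16) + 16 := by omega
        _ ≤ 2 ^ (n / 16) := pow_aux _ (by omega)
    -- move to the reals
    have hchainR : (2 : ℝ) ^ (n : ℝ) ≤
        (2 : ℝ) ^ ((n : ℝ) / 16) * (3 : ℝ) ^ j * (2 : ℝ) ^ ((n : ℝ) / 2) * s := by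
      have hc1 : ((2 ^ n : ℕ) : ℝ) ≤ (((n + 1) * 3 ^ j * 2 ^ (n / 2) * s : ℕ) : ℝ) := by
        exact_mod_cast hchain
      push_cast at hc1
      have hc2 : ((n : ℝ) + 1) ≤ (2 : ℝ) ^ ((n : ℝ) / 16) := by
        have := hn1pow
        have hcast : ((n + 1 : ℕ) : ℝ) ≤ ((2 ^ (n / 16) : ℕ) : ℝ) := by exact_mod_cast this
        push_cast at hcast
        calc (n : ℝ) + 1 ≤ (2 : ℝ) ^ (n / 16 : ℕ) := hcast
          _ = (2 : ℝ) ^ ((n / 16 : ℕ) : ℝ) := by rw [Real.rpow_natCast]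
          _ ≤ (2 : ℝ) ^ ((n : ℝ) / 16) := by
              apply Real.rpow_le_rpow_of_exponent_le one_le_two
              exact_mod_cast Nat.cast_div_le
      have hc3 : (2 : ℝ) ^ (n / 2 : ℕ) ≤ (2 : ℝ) ^ ((n : ℝ) / 2) := by
        rw [← Real.rpow_natCast 2 (n / 2)]
        apply Real.rpow_le_rpow_of_exponent_le one_le_two
        exact_mod_cast Nat.cast_div_le
      have h2n : (2 : ℝ) ^ (n : ℝ) = (2 : ℝ) ^ (n : ℕ) := by rw [Real.rpow_natCast]
      rw [h2n]
      have h3j : (0:ℝ) < 3 ^ j := by positivity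
      have hsnn : (0:ℝ) ≤ s := by linarith
      calc (2:ℝ) ^ (n:ℕ) ≤ ((n : ℝ) + 1) * 3 ^ j * 2 ^ (n / 2 : ℕ) * s := by
            convert hc1 using 2 <;> push_cast <;> ring
        _ ≤ (2 : ℝ) ^ ((n : ℝ) / 16) * 3 ^ j * 2 ^ ((n : ℝ) / 2) * s := by
            apply mul_le_mul_of_nonneg_right _ hsnn
            apply mul_le_mul
            · exact mul_le_mul_of_nonneg_right hc2 (le_of_lt h3j)
            · exact hc3
            · positivity
            · positivity
    -- 3^j ≤ 2^(8j/5), j ≤ n/4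
    have h4j : 4 * j ≤ n := by omega
    have h3le : (3 : ℝ) ≤ (2 : ℝ) ^ ((8 : ℝ) / 5) := by
      have h5 : ((2 : ℝ) ^ ((8 : ℝ) / 5)) ^ (5 : ℕ) = 256 := by
        rw [← Real.rpow_natCast ((2:ℝ) ^ ((8:ℝ)/5)) 5, ← Real.rpow_mul (by norm_num),
          show (8:ℝ)/5*(5:ℕ) = ((8:ℕ):ℝ) by push_cast; ring, Real.rpow_natCast]
        norm_num
      have h35 : (3 : ℝ) ^ (5 : ℕ) ≤ ((2 : ℝ) ^ ((8 : ℝ) / 5)) ^ (5 : ℕ) := by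
        rw [h5]; norm_num
      exact le_of_pow_le_pow_left₀ (by norm_num) (by positivity) h35
    have h3jR : (3 : ℝ) ^ j ≤ (2 : ℝ) ^ ((8 : ℝ) / 5 * j) := by
      calc (3 : ℝ) ^ j ≤ ((2 : ℝ) ^ ((8 : ℝ) / 5)) ^ j :=
            pow_le_pow_left₀ (by norm_num) h3le j
        _ = (2 : ℝ) ^ ((8 : ℝ) / 5 * j) := by
            rw [← Real.rpow_natCast ((2:ℝ) ^ ((8:ℝ)/5)) j, ← Real.rpow_mul (by norm_num)]
    have hjR : (8 : ℝ) / 5 * j ≤ 2 * (n : ℝ) / 5 := by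
      have : (4 : ℝ) * j ≤ n := by exact_mod_cast h4j
      linarith
    have h3jR2 : (3 : ℝ) ^ j ≤ (2 : ℝ) ^ (2 * (n : ℝ) / 5) :=
      le_trans h3jR (Real.rpow_le_rpow_of_exponent_le one_le_two hjR)
    -- conclude s ≥ 2^(3n/80)
    have hfinal : (2 : ℝ) ^ (n : ℝ) ≤ (2 : ℝ) ^ (77 * (n : ℝ) / 80) * s := by
      calc (2 : ℝ) ^ (n : ℝ) ≤
          (2 : ℝ) ^ ((n : ℝ) / 16) * (3 : ℝ) ^ j * (2 : ℝ) ^ ((n : ℝ) / 2) * s := hchainR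
        _ ≤ (2 : ℝ) ^ ((n : ℝ) / 16) * (2 : ℝ) ^ (2 * (n : ℝ) / 5) *
              (2 : ℝ) ^ ((n : ℝ) / 2) * s := by
            have : (0:ℝ) ≤ s := by linarith
            gcongr
        _ = (2 : ℝ) ^ ((n : ℝ) / 16 + 2 * (n : ℝ) / 5 + (n : ℝ) / 2) * s := by
            rw [← Real.rpow_add (by norm_num), ← Real.rpow_add (by norm_num)]
        _ = (2 : ℝ) ^ (77 * (n : ℝ) / 80) * s := by ring_nf
    have hslb : (2 : ℝ) ^ (3 * (n : ℝ) / 80) ≤ s := by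
      have h1 : (2 : ℝ) ^ (n : ℝ) / (2 : ℝ) ^ (77 * (n : ℝ) / 80) =
          (2 : ℝ) ^ (3 * (n : ℝ) / 80) := by
        rw [← Real.rpow_sub (by norm_num)]; ring_nf
      rw [← h1]
      rw [div_le_iff₀ (by positivity)]
      linarith [hfinal]
    have hlogslb : 3 * (n : ℝ) / 80 ≤ Real.logb 2 s := by
      calc 3 * (n : ℝ) / 80 = Real.logb 2 ((2:ℝ) ^ (3 * (n : ℝ) / 80)) :=
            (Real.logb_rpow (by norm_num) (by norm_num)).symm
        _ ≤ Real.logb 2 s := (Real.logb_le_logb one_lt_two (by positivity) hspos).mpr hslb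
    have : Real.logb 2 s ≤ (n : ℝ) / 256 := le_trans hupper hpow_le
    linarith
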